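/- arXiv:2211.16892 — 2 statements merged into one kernel-verified Lean document; each statement's English description precedes it below -/
import Mathlib

section
/- Let f : ℕ → ℂ, let N be a positive real parameter, and let S ⊆ [N/2, N] ∩ ℕ be a finite set. Then |∑_{n ∈ S} f(n)| ≤ (1/log N) ∑_{n ∈ S} |f(n)| + (1/log N) |∑_{n, m : n·m ∈ S} f(n·m) Λ(m)|, where Λ is the von Mangoldt function and the double sum runs over all pairs (n,m) of positive integers with n·m ∈ S. -/
open scoped BigOperators

/-- Montgomery–Vaughan type decomposition: for `f : ℕ → ℂ`, a parameter `N ≥ 2` and a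
finite set `S ⊆ [N/2, N] ∩ ℕ`, we have
`|∑_{n ∈ S} f n| ≤ (1/log N) ∑_{n ∈ S} |f n| + (1/log N) |∑_{nm ∈ S} f(nm) Λ(m)|`,
where the double sum over pairs `(n,m)` with `n·m ∈ S` is expressed as a sum over
`k ∈ S` and divisors `m` of `k` (so that `n = k/m` and `f(n·m) = f k`). -/
theorem stmt0 (f : ℕ → ℂ) (N : ℝ) (hN : 2 ≤ N) (S : Finset ℕ)
    (hSpos : ∀ n ∈ S, 0 < n)
    (hS : ∀ n ∈ S, N / 2 ≤ (n : ℝ) ∧ (n : ℝ) ≤ N) :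
    ‖∑ n ∈ S, f n‖ ≤
      (1 / Real.log N) * ∑ n ∈ S, ‖f n‖ +
      (1 / Real.log N) *
        ‖∑ k ∈ S, ∑ m ∈ k.divisors, f k * (ArithmeticFunction.vonMangoldt m : ℂ)‖ := by
  have hN0 : (0 : ℝ) < N := by linarith
  have hlog : 0 < Real.log N := Real.log_pos (by linarith)
  rw [one_div_mul_eq_div, one_div_mul_eq_div, ← add_div, le_div_iff₀ hlog]
  -- key: log N * ∑ = ∑ f n * log(N/n) + ∑ f n * log n
  have key : (∑ n ∈ S, f n) * (Real.log N : ℂ) =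
      (∑ n ∈ S, f n * (Real.log (N / n) : ℂ)) +
      ∑ k ∈ S, ∑ m ∈ k.divisors, f k * (ArithmeticFunction.vonMangoldt m : ℂ) := by
    rw [Finset.sum_mul, ← Finset.sum_add_distrib]
    refine Finset.sum_congr rfl fun n hn => ?_
    have hn0 : 0 < n := hSpos n hn
    have hlogsplit : Real.log N = Real.log (N / n) + Real.log n := by
      rw [Real.log_div (ne_of_gt hN0) (by exact_mod_cast hn0.ne')]
      ring
    have hvm : (Real.log n : ℂ) = ∑ m ∈ n.divisors, (ArithmeticFunction.vonMangoldt m : ℂ) := by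
      rw [← ArithmeticFunction.vonMangoldt_sum]
      push_cast
      ring
    rw [hlogsplit, Complex.ofReal_add, mul_add, hvm, Finset.mul_sum]
  calc ‖∑ n ∈ S, f n‖ * Real.log N
      = ‖(∑ n ∈ S, f n) * (Real.log N : ℂ)‖ := by
        rw [norm_mul, Complex.norm_real, Real.norm_eq_abs, abs_of_pos hlog]
    _ = ‖(∑ n ∈ S, f n * (Real.log (N / n) : ℂ)) +
        ∑ k ∈ S, ∑ m ∈ k.divisors, f k * (ArithmeticFunction.vonMangoldt m : ℂ)‖ := by
        rw [key]
    _ ≤ ‖∑ n ∈ S, f n * (Real.log (N / n) : ℂ)‖ +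
        ‖∑ k ∈ S, ∑ m ∈ k.divisors, f k * (ArithmeticFunction.vonMangoldt m : ℂ)‖ :=
        norm_add_le _ _
    _ ≤ (∑ n ∈ S, ‖f n‖) +
        ‖∑ k ∈ S, ∑ m ∈ k.divisors, f k * (ArithmeticFunction.vonMangoldt m : ℂ)‖ := by
        gcongr
        calc ‖∑ n ∈ S, f n * (Real.log (N / n) : ℂ)‖
            ≤ ∑ n ∈ S, ‖f n * (Real.log (N / n) : ℂ)‖ := norm_sum_le _ _
          _ ≤ ∑ n ∈ S, ‖f n‖ := by
              refine Finset.sum_le_sum fun n hn => ?_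
              rw [norm_mul, Complex.norm_real, Real.norm_eq_abs]
              have h1 := (hS n hn).1
              have h2 := (hS n hn).2
              have hn0 : 0 < n := hSpos n hn
              have hle : Real.log (N / n) ≤ Real.log 2 := by
                apply Real.log_le_log (by positivity)
                rw [div_le_iff₀ (by exact_mod_cast hn0)]
                nlinarith
              have hge : 0 ≤ Real.log (N / n) := by
                apply Real.log_nonneg
                rw [le_div_iff₀ (by exact_mod_cast hn0)]
                linarith
              have h2' : Real.log 2 ≤ 1 :=
                (Real.log_le_sub_one_of_pos (by norm_num)).trans (by norm_num)
              have : |Real.log (N / n)| ≤ 1 := by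
                rw [abs_of_nonneg hge]; linarith
              nlinarith [norm_nonneg (f n)]
end

section
/- Let y' < y be real numbers with 1 ≤ y', let M and x be real numbers with y ≤ M < x, and let n be a positive integer with M < n ≤ x all of whose prime factors lie in [y', y]. Then there exists a unique triple (u, v, p) of positive integers u, v and a prime p such that: n = u·v; y' ≤ p ≤ y and p divides v; every prime factor of u lies in [y', p]; M < v ≤ M·p; and every prime factor of v lies in [p, y]. -/
section aux

variable {M : ℝ}

/-- Contradiction helper: if `v₁ ≤ M·p`, `M < v₂` and `v₂·p ∣ v₁`, contradiction. -/
lemma stmt3_aux (v₁ p v₂ : ℕ) (hv₁ : 0 < v₁) (hp : (0:ℝ) < (p:ℝ))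
    (h1 : (v₁ : ℝ) ≤ M * p) (h2 : M < (v₂ : ℝ)) (hdvd : v₂ * p ∣ v₁) : False := by
  have hle : v₂ * p ≤ v₁ := Nat.le_of_dvd hv₁ hdvd
  have hle' : (v₂ : ℝ) * p ≤ (v₁ : ℝ) := by exact_mod_cast hle
  have : (v₂ : ℝ) * p ≤ M * p := hle'.trans h1
  have hv2M : (v₂ : ℝ) ≤ M := le_of_mul_le_mul_right this hp
  linarith

end aux

/-- Unique Vaughan-type factorisation of `[y',y]`-smooth numbers: if `1 ≤ y' < y ≤ M < x`,
and `n` is a positive integer with `M < n ≤ x` all of whose prime factors lie in `[y', y]`,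
then there is a unique triple `(u, v, p)` with `u, v` positive, `p` prime, `n = u·v`,
`y' ≤ p ≤ y`, `p ∣ v`, all prime factors of `u` in `[y', p]`, `M < v ≤ M·p`, and all
prime factors of `v` in `[p, y]`. -/
theorem stmt3 (y' y M x : ℝ) (hy' : 1 ≤ y') (hy'y : y' < y) (hyM : y ≤ M) (hMx : M < x)
    (n : ℕ) (hn : 0 < n) (hnM : M < (n : ℝ)) (hnx : (n : ℝ) ≤ x)
    (hsmooth : ∀ p ∈ n.primeFactors, y' ≤ (p : ℝ) ∧ (p : ℝ) ≤ y) :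
    ∃! t : ℕ × ℕ × ℕ,
      0 < t.1 ∧ 0 < t.2.1 ∧ Nat.Prime t.2.2 ∧
      n = t.1 * t.2.1 ∧
      y' ≤ (t.2.2 : ℝ) ∧ (t.2.2 : ℝ) ≤ y ∧
      t.2.2 ∣ t.2.1 ∧
      (∀ p ∈ t.1.primeFactors, y' ≤ (p : ℝ) ∧ (p : ℝ) ≤ (t.2.2 : ℝ)) ∧
      M < (t.2.1 : ℝ) ∧ (t.2.1 : ℝ) ≤ M * (t.2.2 : ℝ) ∧
      (∀ p ∈ t.2.1.primeFactors, (t.2.2 : ℝ) ≤ (p : ℝ) ∧ (p : ℝ) ≤ y) := by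
  have hM1 : (1:ℝ) < M := lt_of_lt_of_le (lt_of_le_of_lt hy' hy'y) hyM
  -- Existence, by strong induction.
  have key : ∀ n : ℕ, 0 < n → M < (n:ℝ) →
      (∀ p ∈ n.primeFactors, y' ≤ (p:ℝ) ∧ (p:ℝ) ≤ y) →
      ∃ u v p : ℕ, 0 < u ∧ 0 < v ∧ p.Prime ∧ n = u * v ∧ y' ≤ (p:ℝ) ∧ (p:ℝ) ≤ y ∧ p ∣ v ∧
        (∀ q ∈ u.primeFactors, y' ≤ (q:ℝ) ∧ (q:ℝ) ≤ (p:ℝ)) ∧ M < (v:ℝ) ∧ (v:ℝ) ≤ M * p ∧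
        (∀ q ∈ v.primeFactors, (p:ℝ) ≤ (q:ℝ) ∧ (q:ℝ) ≤ y) := by
    intro n
    induction n using Nat.strong_induction_on with
    | _ n ih =>
      intro hn hnM hs
      have hn1 : 1 < n := by exact_mod_cast hM1.trans hnM
      set q := n.minFac with hqdef
      have hq : q.Prime := Nat.minFac_prime (by omega)
      have hqmem : q ∈ n.primeFactors :=
        Nat.mem_primeFactors.mpr ⟨hq, n.minFac_dvd, hn.ne'⟩
      have hqy : y' ≤ (q:ℝ) ∧ (q:ℝ) ≤ y := hs q hqmem
      obtain ⟨m, hnm⟩ : ∃ m, n = q * m := n.minFac_dvd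
      have hm0 : 0 < m := by
        rcases Nat.eq_zero_or_pos m with h | h
        · subst h; rw [mul_zero] at hnm; omega
        · exact h
      have hmdvd : m ∣ n := ⟨q, by rw [hnm, mul_comm]⟩
      have hq0 : (0:ℝ) < (q:ℝ) := by exact_mod_cast hq.pos
      by_cases hMm : (m:ℝ) ≤ M
      · refine ⟨1, n, q, one_pos, hn, hq, (one_mul n).symm, hqy.1, hqy.2, n.minFac_dvd,
          ?_, hnM, ?_, ?_⟩
        · simp
        · have : (n:ℝ) = (q:ℝ) * (m:ℝ) := by exact_mod_cast hnm
          rw [this, mul_comm]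
          exact mul_le_mul_of_nonneg_right hMm (le_of_lt hq0)
        · intro r hr
          have hr2 := (Nat.mem_primeFactors.mp hr).1.two_le
          have hrd := (Nat.mem_primeFactors.mp hr).2.1
          have : q ≤ r := Nat.minFac_le_of_dvd hr2 hrd
          exact ⟨by exact_mod_cast this, (hs r hr).2⟩
      · push_neg at hMm
        have hmn : m < n := by
          have := hq.two_le
          calc m < 2 * m := by omega
            _ ≤ q * m := Nat.mul_le_mul_right m hq.two_le
            _ = n := hnm.symm
        have hms : ∀ p ∈ m.primeFactors, y' ≤ (p:ℝ) ∧ (p:ℝ) ≤ y := fun p hp =>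
          hs p (Nat.primeFactors_mono hmdvd hn.ne' hp)
        obtain ⟨u', v', p', hu', hv', hp', heq, hpy', hpy, hpd, hup, hMv, hvM, hvp⟩ :=
          ih m hmn hm0 hMm hms
        have hp'n : p' ∣ n := (hpd.trans (Dvd.intro_left u' heq.symm)).trans hmdvd
        have hqp' : q ≤ p' := Nat.minFac_le_of_dvd hp'.two_le hp'n
        refine ⟨q * u', v', p', Nat.mul_pos hq.pos hu', hv', hp',
          by rw [hnm, heq, mul_assoc], hpy', hpy, hpd, ?_, hMv, hvM, hvp⟩
        intro r hr
        rw [Nat.primeFactors_mul hq.ne_zero hu'.ne', hq.primeFactors] at hr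
        rcases Finset.mem_union.mp hr with hr | hr
        · have : r = q := Finset.mem_singleton.mp hr
          subst this
          exact ⟨hqy.1, by exact_mod_cast hqp'⟩
        · exact hup r hr
  obtain ⟨u, v, p, hprop⟩ := key n hn hnM hsmooth
  -- Uniqueness: any two valid triples coincide.
  have uniq : ∀ u₁ v₁ p₁ u₂ v₂ p₂ : ℕ,
      (0 < u₁ ∧ 0 < v₁ ∧ p₁.Prime ∧ n = u₁ * v₁ ∧ y' ≤ (p₁:ℝ) ∧ (p₁:ℝ) ≤ y ∧ p₁ ∣ v₁ ∧
        (∀ q ∈ u₁.primeFactors, y' ≤ (q:ℝ) ∧ (q:ℝ) ≤ (p₁:ℝ)) ∧ M < (v₁:ℝ) ∧ (v₁:ℝ) ≤ M * p₁ ∧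
        (∀ q ∈ v₁.primeFactors, (p₁:ℝ) ≤ (q:ℝ) ∧ (q:ℝ) ≤ y)) →
      (0 < u₂ ∧ 0 < v₂ ∧ p₂.Prime ∧ n = u₂ * v₂ ∧ y' ≤ (p₂:ℝ) ∧ (p₂:ℝ) ≤ y ∧ p₂ ∣ v₂ ∧
        (∀ q ∈ u₂.primeFactors, y' ≤ (q:ℝ) ∧ (q:ℝ) ≤ (p₂:ℝ)) ∧ M < (v₂:ℝ) ∧ (v₂:ℝ) ≤ M * p₂ ∧
        (∀ q ∈ v₂.primeFactors, (p₂:ℝ) ≤ (q:ℝ) ∧ (q:ℝ) ≤ y)) →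
      u₁ = u₂ ∧ v₁ = v₂ ∧ p₁ = p₂ := by
    clear hprop hnx hMx
    intro u₁ v₁ p₁ u₂ v₂ p₂ H1 H2
    obtain ⟨hu₁, hv₁, hp₁, heq₁, -, -, hpd₁, hup₁, hMv₁, hvM₁, hvp₁⟩ := H1
    obtain ⟨hu₂, hv₂, hp₂, heq₂, -, -, hpd₂, hup₂, hMv₂, hvM₂, hvp₂⟩ := H2
    have hp₁0 : (0:ℝ) < (p₁:ℝ) := by exact_mod_cast hp₁.pos
    have hp₂0 : (0:ℝ) < (p₂:ℝ) := by exact_mod_cast hp₂.pos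
    -- factorization facts
    have fact_n₁ : ∀ r, n.factorization r = u₁.factorization r + v₁.factorization r := by
      intro r
      rw [heq₁, Nat.factorization_mul hu₁.ne' hv₁.ne']; rfl
    have fact_n₂ : ∀ r, n.factorization r = u₂.factorization r + v₂.factorization r := by
      intro r
      rw [heq₂, Nat.factorization_mul hu₂.ne' hv₂.ne']; rfl
    have fu₁ : ∀ r, p₁ < r → u₁.factorization r = 0 := by
      intro r hr
      by_contra h
      have : r ∈ u₁.primeFactors := by
        rw [← Nat.support_factorization]; exact Finsupp.mem_support_iff.mpr h
      have := (hup₁ r this).2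
      have : r ≤ p₁ := by exact_mod_cast this
      omega
    have fu₂ : ∀ r, p₂ < r → u₂.factorization r = 0 := by
      intro r hr
      by_contra h
      have : r ∈ u₂.primeFactors := by
        rw [← Nat.support_factorization]; exact Finsupp.mem_support_iff.mpr h
      have := (hup₂ r this).2
      have : r ≤ p₂ := by exact_mod_cast this
      omega
    have fv₁lt : ∀ r, r < p₁ → v₁.factorization r = 0 := by
      intro r hr
      by_contra h
      have : r ∈ v₁.primeFactors := by
        rw [← Nat.support_factorization]; exact Finsupp.mem_support_iff.mpr h
      have := (hvp₁ r this).1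
      have : p₁ ≤ r := by exact_mod_cast this
      omega
    have fv₂lt : ∀ r, r < p₂ → v₂.factorization r = 0 := by
      intro r hr
      by_contra h
      have : r ∈ v₂.primeFactors := by
        rw [← Nat.support_factorization]; exact Finsupp.mem_support_iff.mpr h
      have := (hvp₂ r this).1
      have : p₂ ≤ r := by exact_mod_cast this
      omega
    have fv₁ge : ∀ r, r ∈ v₁.primeFactors → p₁ ≤ r := by
      intro r hr; exact_mod_cast (hvp₁ r hr).1
    have fv₂ge : ∀ r, r ∈ v₂.primeFactors → p₂ ≤ r := by
      intro r hr; exact_mod_cast (hvp₂ r hr).1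
    have fv₁full : ∀ r, p₁ < r → v₁.factorization r = n.factorization r := by
      intro r hr; rw [fact_n₁ r, fu₁ r hr, zero_add]
    have fv₂full : ∀ r, p₂ < r → v₂.factorization r = n.factorization r := by
      intro r hr; rw [fact_n₂ r, fu₂ r hr, zero_add]
    have fv₁pos : 1 ≤ v₁.factorization p₁ := hp₁.factorization_pos_of_dvd hv₁.ne' hpd₁
    have fv₂pos : 1 ≤ v₂.factorization p₂ := hp₂.factorization_pos_of_dvd hv₂.ne' hpd₂
    -- first: p₁ = p₂
    have hpp : p₁ = p₂ := by
      by_contra hne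
      rcases Nat.lt_or_ge p₁ p₂ with hlt | hge
      · -- p₁ < p₂ : show v₂ * p₁ ∣ v₁, contradiction
        have hdvd : v₂ * p₁ ∣ v₁ := by
          rw [← Nat.factorization_le_iff_dvd (Nat.mul_ne_zero hv₂.ne' hp₁.ne_zero) hv₁.ne']
          intro r
          rw [Nat.factorization_mul hv₂.ne' hp₁.ne_zero, hp₁.factorization]
          by_cases hr : r = p₁
          · subst hr
            simp only [Finsupp.coe_add, Pi.add_apply, Finsupp.single_eq_same]
            rw [fv₂lt r hlt]
            simpa using fv₁pos
          · simp only [Finsupp.coe_add, Pi.add_apply, Finsupp.single_eq_of_ne' (Ne.symm hr),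
              add_zero]
            by_cases h0 : v₂.factorization r = 0
            · simp [h0]
            · have hrm : r ∈ v₂.primeFactors := by
                rw [← Nat.support_factorization]; exact Finsupp.mem_support_iff.mpr h0
              have hp₁r : p₁ < r := lt_of_lt_of_le hlt (fv₂ge r hrm)
              rw [fv₁full r hp₁r, fact_n₂ r]
              exact Nat.le_add_left _ _
        exact absurd hdvd (fun h => stmt3_aux (M := M) v₁ p₁ v₂ hv₁ hp₁0 hvM₁ hMv₂ h)
      · have hlt : p₂ < p₁ := by omega
        have hdvd : v₁ * p₂ ∣ v₂ := by
          rw [← Nat.factorization_le_iff_dvd (Nat.mul_ne_zero hv₁.ne' hp₂.ne_zero) hv₂.ne']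
          intro r
          rw [Nat.factorization_mul hv₁.ne' hp₂.ne_zero, hp₂.factorization]
          by_cases hr : r = p₂
          · subst hr
            simp only [Finsupp.coe_add, Pi.add_apply, Finsupp.single_eq_same]
            rw [fv₁lt r hlt]
            simpa using fv₂pos
          · simp only [Finsupp.coe_add, Pi.add_apply, Finsupp.single_eq_of_ne' (Ne.symm hr),
              add_zero]
            by_cases h0 : v₁.factorization r = 0
            · simp [h0]
            · have hrm : r ∈ v₁.primeFactors := by
                rw [← Nat.support_factorization]; exact Finsupp.mem_support_iff.mpr h0
              have hp₂r : p₂ < r := lt_of_lt_of_le hlt (fv₁ge r hrm)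
              rw [fv₂full r hp₂r, fact_n₁ r]
              exact Nat.le_add_left _ _
        exact absurd hdvd (fun h => stmt3_aux (M := M) v₂ p₂ v₁ hv₂ hp₂0 hvM₂ hMv₁ h)
    subst hpp
    -- next: equal multiplicity at p₁
    have hmul : v₁.factorization p₁ = v₂.factorization p₁ := by
      by_contra hne
      rcases Nat.lt_or_ge (v₁.factorization p₁) (v₂.factorization p₁) with hlt | hge
      · -- v₁ * p₁ ∣ v₂, contradiction
        have hdvd : v₁ * p₁ ∣ v₂ := by
          rw [← Nat.factorization_le_iff_dvd (Nat.mul_ne_zero hv₁.ne' hp₁.ne_zero) hv₂.ne']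
          intro r
          rw [Nat.factorization_mul hv₁.ne' hp₁.ne_zero, hp₁.factorization]
          by_cases hr : r = p₁
          · subst hr
            simp only [Finsupp.coe_add, Pi.add_apply, Finsupp.single_eq_same]
            omega
          · simp only [Finsupp.coe_add, Pi.add_apply, Finsupp.single_eq_of_ne' (Ne.symm hr),
              add_zero]
            by_cases h0 : v₁.factorization r = 0
            · simp [h0]
            · have hrm : r ∈ v₁.primeFactors := by
                rw [← Nat.support_factorization]; exact Finsupp.mem_support_iff.mpr h0
              have hp₁r : p₁ < r := lt_of_le_of_ne (fv₁ge r hrm) (fun h => hr h.symm)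
              rw [fv₁full r hp₁r, fv₂full r hp₁r]
        exact absurd hdvd (fun h => stmt3_aux (M := M) v₂ p₁ v₁ hv₂ hp₁0 hvM₂ hMv₁ h)
      · have hlt : v₂.factorization p₁ < v₁.factorization p₁ := by omega
        have hdvd : v₂ * p₁ ∣ v₁ := by
          rw [← Nat.factorization_le_iff_dvd (Nat.mul_ne_zero hv₂.ne' hp₁.ne_zero) hv₁.ne']
          intro r
          rw [Nat.factorization_mul hv₂.ne' hp₁.ne_zero, hp₁.factorization]
          by_cases hr : r = p₁
          · subst hr
            simp only [Finsupp.coe_add, Pi.add_apply, Finsupp.single_eq_same]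
            omega
          · simp only [Finsupp.coe_add, Pi.add_apply, Finsupp.single_eq_of_ne' (Ne.symm hr),
              add_zero]
            by_cases h0 : v₂.factorization r = 0
            · simp [h0]
            · have hrm : r ∈ v₂.primeFactors := by
                rw [← Nat.support_factorization]; exact Finsupp.mem_support_iff.mpr h0
              have hp₁r : p₁ < r := lt_of_le_of_ne (fv₂ge r hrm) (fun h => hr h.symm)
              rw [fv₂full r hp₁r, fv₁full r hp₁r]
        exact absurd hdvd (fun h => stmt3_aux (M := M) v₁ p₁ v₂ hv₁ hp₁0 hvM₁ hMv₂ h)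
    -- now v₁ = v₂
    have hvv : v₁ = v₂ := by
      have hfeq : v₁.factorization = v₂.factorization := by
        ext r
        rcases lt_trichotomy r p₁ with h | h | h
        · rw [fv₁lt r h, fv₂lt r h]
        · subst h; exact hmul
        · rw [fv₁full r h, fv₂full r h]
      exact Nat.factorization_inj (by simpa using hv₁.ne') (by simpa using hv₂.ne') hfeq
    subst hvv
    have huu : u₁ = u₂ := Nat.eq_of_mul_eq_mul_right hv₁ (heq₁ ▸ heq₂)
    exact ⟨huu, rfl, rfl⟩
  refine ⟨(u, v, p), hprop, ?_⟩
  rintro ⟨u₂, v₂, p₁⟩ h₂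
  obtain ⟨h1, h2, h3⟩ := uniq u₂ v₂ p₁ u v p h₂ hprop
  simp [Prod.ext_iff, h1, h2, h3]
end
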